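/- (Jacobi identity) For every τ in the upper half-plane H, the function v ↦ θ(v, τ) is differentiable in v and its derivative at v = 0 satisfies θ'(0, τ) = π · θ₁(0, τ) · θ₂(0, τ) · θ₃(0, τ). -/

import Mathlib

open Complex Real

/-- `q = e^{2πiτ}`. -/
noncomputable def jq (τ : ℂ) : ℂ := Complex.exp (2 * (π : ℂ) * Complex.I * τ)

/-- `θ(v,τ) = 2 q^{1/8} sin(πv) ∏_{j=1}^∞ (1-q^j)(1-e^{2πiv}q^j)(1-e^{-2πiv}q^j)`. -/
noncomputable def jTheta (v τ : ℂ) : ℂ :=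
  2 * Complex.exp ((π : ℂ) * Complex.I * τ / 4) * Complex.sin ((π : ℂ) * v) *
    ∏' j : ℕ, ((1 - jq τ ^ (j + 1)) *
      (1 - Complex.exp (2 * (π : ℂ) * Complex.I * v) * jq τ ^ (j + 1)) *
      (1 - Complex.exp (-(2 * (π : ℂ) * Complex.I * v)) * jq τ ^ (j + 1)))

/-- `θ₁(v,τ) = 2 q^{1/8} cos(πv) ∏_{j=1}^∞ (1-q^j)(1+e^{2πiv}q^j)(1+e^{-2πiv}q^j)`. -/
noncomputable def jTheta₁ (v τ : ℂ) : ℂ :=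
  2 * Complex.exp ((π : ℂ) * Complex.I * τ / 4) * Complex.cos ((π : ℂ) * v) *
    ∏' j : ℕ, ((1 - jq τ ^ (j + 1)) *
      (1 + Complex.exp (2 * (π : ℂ) * Complex.I * v) * jq τ ^ (j + 1)) *
      (1 + Complex.exp (-(2 * (π : ℂ) * Complex.I * v)) * jq τ ^ (j + 1)))

/-- `θ₂(v,τ) = ∏_{j=1}^∞ (1-q^j)(1-e^{2πiv}q^{j-1/2})(1-e^{-2πiv}q^{j-1/2})`. -/
noncomputable def jTheta₂ (v τ : ℂ) : ℂ :=
  ∏' j : ℕ, ((1 - jq τ ^ (j + 1)) *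
    (1 - Complex.exp (2 * (π : ℂ) * Complex.I * v) *
      Complex.exp (2 * (π : ℂ) * Complex.I * τ * ((j : ℂ) + 1 / 2))) *
    (1 - Complex.exp (-(2 * (π : ℂ) * Complex.I * v)) *
      Complex.exp (2 * (π : ℂ) * Complex.I * τ * ((j : ℂ) + 1 / 2))))

/-- `θ₃(v,τ) = ∏_{j=1}^∞ (1-q^j)(1+e^{2πiv}q^{j-1/2})(1+e^{-2πiv}q^{j-1/2})`. -/
noncomputable def jTheta₃ (v τ : ℂ) : ℂ :=
  ∏' j : ℕ, ((1 - jq τ ^ (j + 1)) *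
    (1 + Complex.exp (2 * (π : ℂ) * Complex.I * v) *
      Complex.exp (2 * (π : ℂ) * Complex.I * τ * ((j : ℂ) + 1 / 2))) *
    (1 + Complex.exp (-(2 * (π : ℂ) * Complex.I * v)) *
      Complex.exp (2 * (π : ℂ) * Complex.I * τ * ((j : ℂ) + 1 / 2))))


namespace JacobiAux



lemma log_summable {a : ℕ → ℂ} (ha : Summable a) :
    Summable fun n => Complex.log (1 + a n) := by
  have h0 : Filter.Tendsto a Filter.atTop (nhds 0) := ha.tendsto_atTop_zero
  have hev : ∀ᶠ n in Filter.atTop, ‖a n‖ ≤ 1/2 := by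
    have := h0.eventually (Metric.closedBall_mem_nhds (0:ℂ) (by norm_num : (0:ℝ) < 1/2))
    simpa [Metric.mem_closedBall, dist_eq_norm] using this
  apply Summable.of_norm_bounded_eventually (g := fun n => (3/2) * ‖a n‖) (ha.norm.mul_left _)
  rw [Nat.cofinite_eq_atTop]
  filter_upwards [hev] with n hn
  exact Complex.norm_log_one_add_half_le_self hn

lemma hasProd_one_add {a : ℕ → ℂ} (ha : Summable a) (h : ∀ n, 1 + a n ≠ 0) :
    HasProd (fun n => 1 + a n) (Complex.exp (∑' n, Complex.log (1 + a n))) := by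
  have hl := log_summable ha
  have h2 := hl.hasSum.cexp
  have he : (Complex.exp ∘ fun n => Complex.log (1 + a n)) = fun n => 1 + a n :=
    funext fun n => Complex.exp_log (h n)
  rwa [he] at h2

lemma one_add_ne {z : ℂ} (hz : ‖z‖ < 1) : 1 + z ≠ 0 := by
  intro h
  have hz1 : z = -1 := by linear_combination h
  rw [hz1] at hz
  simp at hz

lemma one_sub_ne {z : ℂ} (hz : ‖z‖ < 1) : 1 - z ≠ 0 := by
  have := one_add_ne (z := -z) (by simpa using hz)
  simpa [sub_eq_add_neg] using this

lemma mult_one_add {a : ℕ → ℂ} (ha : Summable a) (h : ∀ n, ‖a n‖ < 1) :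
    Multipliable (fun n => 1 + a n) ∧ (∏' n, (1 + a n)) ≠ 0 := by
  have hp := hasProd_one_add ha fun n => one_add_ne (h n)
  exact ⟨⟨_, hp⟩, by rw [hp.tprod_eq]; exact Complex.exp_ne_zero _⟩

lemma mult_one_sub {a : ℕ → ℂ} (ha : Summable a) (h : ∀ n, ‖a n‖ < 1) :
    Multipliable (fun n => 1 - a n) ∧ (∏' n, (1 - a n)) ≠ 0 := by
  have := mult_one_add (a := fun n => -a n) ha.neg (fun n => by simpa using h n)
  simpa [sub_eq_add_neg] using this

lemma summable_pow {x : ℂ} (hx : ‖x‖ < 1) (c : ℂ) (k m : ℕ) (hk : 0 < k) :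
    Summable fun n : ℕ => c * x ^ (k * n + m) := by
  have h1 : ‖x ^ k‖ < 1 := by
    rw [norm_pow]; exact pow_lt_one₀ (norm_nonneg x) hx hk.ne'
  have : Summable fun n : ℕ => (c * x ^ m) * (x ^ k) ^ n :=
    (summable_geometric_of_norm_lt_one h1).mul_left _
  refine this.congr fun n => ?_
  rw [pow_add, pow_mul]; ring

lemma norm_pow_lt {x : ℂ} (hx : ‖x‖ < 1) {e : ℕ} (he : 0 < e) : ‖x ^ e‖ < 1 := by
  rw [norm_pow]; exact pow_lt_one₀ (norm_nonneg x) hx he.ne'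






lemma mult_pow_sub {x : ℂ} (hx : ‖x‖ < 1) (k m : ℕ) (hk : 0 < k) (hm : 0 < m) :
    Multipliable (fun n : ℕ => 1 - x ^ (k * n + m)) ∧ (∏' n : ℕ, (1 - x ^ (k * n + m))) ≠ 0 :=
  mult_one_sub (by simpa using summable_pow hx 1 k m hk)
    (fun n => norm_pow_lt hx (by positivity))

lemma mult_pow_add {x : ℂ} (hx : ‖x‖ < 1) (k m : ℕ) (hk : 0 < k) (hm : 0 < m) :
    Multipliable (fun n : ℕ => 1 + x ^ (k * n + m)) ∧ (∏' n : ℕ, (1 + x ^ (k * n + m))) ≠ 0 :=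
  mult_one_add (by simpa using summable_pow hx 1 k m hk)
    (fun n => norm_pow_lt hx (by positivity))

lemma euler {x : ℂ} (hx : ‖x‖ < 1) :
    (∏' n : ℕ, (1 + x ^ (n + 1))) * (∏' n : ℕ, (1 - x ^ (2 * n + 1))) = 1 := by
  have m1 := mult_pow_sub hx 1 1 one_pos one_pos
  have m2 := mult_pow_sub hx 2 2 two_pos two_pos
  have m3 := mult_pow_sub hx 2 1 two_pos one_pos
  have m4 := mult_pow_add hx 1 1 one_pos one_pos
  simp only [one_mul] at m1 m4
  -- even/odd split of ∏ (1 - x^(k+1))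
  have eq1 : (∏' n : ℕ, (1 - x ^ (2 * n + 1))) * (∏' n : ℕ, (1 - x ^ (2 * n + 2)))
      = ∏' n : ℕ, (1 - x ^ (n + 1)) := by
    have := tprod_even_mul_odd (f := fun k => 1 - x ^ (k + 1))
      (by exact m3.1) (by exact m2.1)
    simpa using this
  have eq2 : (∏' n : ℕ, (1 + x ^ (n + 1))) * (∏' n : ℕ, (1 - x ^ (n + 1)))
      = ∏' n : ℕ, (1 - x ^ (2 * n + 2)) := by
    rw [← Multipliable.tprod_mul m4.1 m1.1]
    exact tprod_congr fun n => by ring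
  have h2 : (∏' n : ℕ, (1 - x ^ (2 * n + 2))) *
      ((∏' n : ℕ, (1 + x ^ (n + 1))) * (∏' n : ℕ, (1 - x ^ (2 * n + 1)))) =
      (∏' n : ℕ, (1 - x ^ (2 * n + 2))) * 1 := by
    rw [mul_one]
    calc (∏' n : ℕ, (1 - x ^ (2 * n + 2))) *
        ((∏' n : ℕ, (1 + x ^ (n + 1))) * (∏' n : ℕ, (1 - x ^ (2 * n + 1))))
        = (∏' n : ℕ, (1 + x ^ (n + 1))) *
          ((∏' n : ℕ, (1 - x ^ (2 * n + 1))) * (∏' n : ℕ, (1 - x ^ (2 * n + 2)))) := by ring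
      _ = (∏' n : ℕ, (1 + x ^ (n + 1))) * (∏' n : ℕ, (1 - x ^ (n + 1))) := by rw [eq1]
      _ = ∏' n : ℕ, (1 - x ^ (2 * n + 2)) := eq2
  exact mul_left_cancel₀ m2.2 h2

lemma bcd {x : ℂ} (hx : ‖x‖ < 1) :
    (∏' n : ℕ, (1 + x ^ (2 * n + 2))) *
      ((∏' n : ℕ, (1 - x ^ (2 * n + 1))) * (∏' n : ℕ, (1 + x ^ (2 * n + 1)))) = 1 := by
  have hy : ‖x ^ 2‖ < 1 := norm_pow_lt hx two_pos
  have m3 := mult_pow_sub hx 2 1 two_pos one_pos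
  have m4 := mult_pow_add hx 2 1 two_pos one_pos
  have hcd : (∏' n : ℕ, (1 - x ^ (2 * n + 1))) * (∏' n : ℕ, (1 + x ^ (2 * n + 1)))
      = ∏' n : ℕ, (1 - (x ^ 2) ^ (2 * n + 1)) := by
    rw [← Multipliable.tprod_mul m3.1 m4.1]
    refine tprod_congr fun n => ?_
    rw [← pow_mul]
    have : 2 * (2 * n + 1) = (2 * n + 1) + (2 * n + 1) := by ring
    rw [this, pow_add]
    ring
  have hb : (∏' n : ℕ, (1 + x ^ (2 * n + 2))) = ∏' n : ℕ, (1 + (x ^ 2) ^ (n + 1)) := by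
    refine tprod_congr fun n => ?_
    rw [← pow_mul, Nat.mul_succ]
  rw [hcd, hb]
  exact euler hy






lemma hasProd_one_sub {a : ℕ → ℂ} (ha : Summable a) (h : ∀ n, 1 - a n ≠ 0) :
    HasProd (fun n => 1 - a n) (Complex.exp (∑' n, Complex.log (1 - a n))) := by
  have := hasProd_one_add (a := fun n => -a n) ha.neg (fun n => by
    simpa [sub_eq_add_neg] using h n)
  simpa [sub_eq_add_neg] using this

lemma log_summable_sub {a : ℕ → ℂ} (ha : Summable a) :
    Summable fun n => Complex.log (1 - a n) := by
  have := log_summable (a := fun n => -a n) ha.neg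
  simpa [sub_eq_add_neg] using this

lemma summable_tail {q : ℂ} (hq : ‖q‖ < 1) (c : ℂ) (J : ℕ) :
    Summable fun i : ℕ => c * q ^ (i + J + 1) := by
  refine (summable_pow hq c 1 (J + 1) one_pos).congr fun i => ?_
  rw [one_mul, ← add_assoc]

/-- The main analytic lemma: differentiability of the theta product in `v`. -/
lemma diffAt_P {q : ℂ} (hq : ‖q‖ < 1) (v₀ : ℂ) :
    DifferentiableAt ℂ (fun v : ℂ => ∏' j : ℕ, ((1 - q ^ (j + 1)) *
      (1 - Complex.exp (2 * (π : ℂ) * Complex.I * v) * q ^ (j + 1)) *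
      (1 - Complex.exp (-(2 * (π : ℂ) * Complex.I * v)) * q ^ (j + 1)))) v₀ := by
  set E₁ : ℂ → ℂ := fun v => Complex.exp (2 * (π : ℂ) * Complex.I * v) with hE₁
  set E₂ : ℂ → ℂ := fun v => Complex.exp (-(2 * (π : ℂ) * Complex.I * v)) with hE₂
  set F : ℕ → ℂ → ℂ := fun j v =>
    (1 - q ^ (j + 1)) * (1 - E₁ v * q ^ (j + 1)) * (1 - E₂ v * q ^ (j + 1)) with hF
  set s : Set ℂ := Metric.ball v₀ 1 with hs
  set M : ℝ := Real.exp (2 * π * (‖v₀‖ + 1)) with hM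
  have hM0 : 0 < M := Real.exp_pos _
  -- bound on the exponentials on s
  have hEb : ∀ v ∈ s, ‖E₁ v‖ ≤ M ∧ ‖E₂ v‖ ≤ M := by
    intro v hv
    have hvn : ‖v‖ ≤ ‖v₀‖ + 1 := by
      have : ‖v - v₀‖ < 1 := by simpa [hs, dist_eq_norm] using hv
      calc ‖v‖ = ‖v₀ + (v - v₀)‖ := by ring_nf
        _ ≤ ‖v₀‖ + ‖v - v₀‖ := norm_add_le _ _
        _ ≤ ‖v₀‖ + 1 := by linarith
    have him : |v.im| ≤ ‖v₀‖ + 1 := le_trans (Complex.abs_im_le_norm v) hvn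
    have hre1 : (2 * (π : ℂ) * Complex.I * v).re = -(2 * π * v.im) := by
      simp [Complex.mul_re, Complex.mul_im]
    constructor
    · rw [hE₁]
      simp only [Complex.norm_exp, hre1]
      apply Real.exp_le_exp.2
      have := abs_le.1 him
      nlinarith [Real.pi_pos]
    · rw [hE₂]
      simp only [Complex.norm_exp, Complex.neg_re, hre1]
      apply Real.exp_le_exp.2
      have := abs_le.1 him
      nlinarith [Real.pi_pos]
  -- choose J
  obtain ⟨J, hJ⟩ : ∃ J : ℕ, ‖q‖ ^ J < 1 / (2 * M) :=
    exists_pow_lt_of_lt_one (by positivity) hq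
  -- key bound
  have hkey : ∀ v ∈ s, ∀ i : ℕ, ∀ c : ℂ, ‖c‖ ≤ M →
      ‖c * q ^ (i + J + 1)‖ ≤ (1 / 2) * ‖q‖ ^ i := by
    intro v hv i c hc
    have h1 : ‖q‖ ^ (i + J + 1) ≤ ‖q‖ ^ J * ‖q‖ ^ i := by
      calc ‖q‖ ^ (i + J + 1) = ‖q‖ ^ J * ‖q‖ ^ i * ‖q‖ := by rw [← pow_add, ← pow_succ]; ring_nf
        _ ≤ ‖q‖ ^ J * ‖q‖ ^ i * 1 := by
            apply mul_le_mul_of_nonneg_left hq.le (by positivity)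
        _ = ‖q‖ ^ J * ‖q‖ ^ i := by ring
    calc ‖c * q ^ (i + J + 1)‖ = ‖c‖ * ‖q‖ ^ (i + J + 1) := by rw [norm_mul, norm_pow]
      _ ≤ M * (‖q‖ ^ J * ‖q‖ ^ i) := by
          apply mul_le_mul hc h1 (by positivity) hM0.le
      _ ≤ M * ((1 / (2 * M)) * ‖q‖ ^ i) := by
          apply mul_le_mul_of_nonneg_left (by
            apply mul_le_mul_of_nonneg_right hJ.le (by positivity)) hM0.le
      _ = (1 / 2) * ‖q‖ ^ i := by field_simp
  have hhalf : ∀ i : ℕ, (1 / 2 : ℝ) * ‖q‖ ^ i ≤ 1 / 2 := by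
    intro i
    have : ‖q‖ ^ i ≤ 1 := pow_le_one₀ (norm_nonneg q) hq.le
    linarith
  -- tail factors are nonvanishing
  have hne : ∀ v ∈ s, ∀ i : ℕ, ∀ c : ℂ, ‖c‖ ≤ M → 1 - c * q ^ (i + J + 1) ≠ 0 := by
    intro v hv i c hc
    exact one_sub_ne (lt_of_le_of_lt (hkey v hv i c hc)
      (lt_of_le_of_lt (hhalf i) (by norm_num)))
  -- HasProd for the tails with a coefficient
  have hps : ∀ v ∈ s, ∀ c : ℂ, ‖c‖ ≤ M →
      HasProd (fun i : ℕ => 1 - c * q ^ (i + J + 1))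
        (Complex.exp (∑' i : ℕ, Complex.log (1 - c * q ^ (i + J + 1)))) := by
    intro v hv c hc
    exact hasProd_one_sub (summable_tail hq c J) (fun i => hne v hv i c hc)
  -- HasProd for the constant factor
  have hsum1 : Summable fun i : ℕ => q ^ (i + J + 1) := by
    simpa using summable_tail hq 1 J
  have hp0 : HasProd (fun i : ℕ => 1 - q ^ (i + J + 1))
      (Complex.exp (∑' i : ℕ, Complex.log (1 - q ^ (i + J + 1)))) :=
    hasProd_one_sub hsum1 (fun i => one_sub_ne (norm_pow_lt hq (by omega)))
  -- the tail HasProd at each point of s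
  have hp_tail : ∀ v ∈ s, HasProd (fun i : ℕ => F (i + J) v)
      ((Complex.exp (∑' i : ℕ, Complex.log (1 - q ^ (i + J + 1))) *
        Complex.exp (∑' i : ℕ, Complex.log (1 - E₁ v * q ^ (i + J + 1)))) *
        Complex.exp (∑' i : ℕ, Complex.log (1 - E₂ v * q ^ (i + J + 1)))) := by
    intro v hv
    exact (hp0.mul (hps v hv (E₁ v) (hEb v hv).1)).mul (hps v hv (E₂ v) (hEb v hv).2)
  -- the comparison function
  set Φ : ℂ → ℂ := fun v => (∏ i ∈ Finset.range J, F i v) *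
      ((Complex.exp (∑' i : ℕ, Complex.log (1 - q ^ (i + J + 1))) *
        Complex.exp (∑' i : ℕ, Complex.log (1 - E₁ v * q ^ (i + J + 1)))) *
        Complex.exp (∑' i : ℕ, Complex.log (1 - E₂ v * q ^ (i + J + 1)))) with hΦ
  have heq : ∀ v ∈ s, (∏' j : ℕ, F j v) = Φ v := by
    intro v hv
    rw [← Multipliable.prod_mul_tprod_nat_mul' (f := fun j => F j v) (k := J) ⟨_, hp_tail v hv⟩, hΦ,
      (hp_tail v hv).tprod_eq]
  -- derivative bounds infrastructure
  have hu : Summable fun i : ℕ => 2 * π * ‖q‖ ^ i :=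
    (summable_geometric_of_lt_one (norm_nonneg q) hq).mul_left _
  have hopen : IsOpen s := Metric.isOpen_ball
  have hconn : IsPreconnected s := (convex_ball v₀ 1).isPreconnected
  have hv₀s : v₀ ∈ s := Metric.mem_ball_self one_pos
  -- differentiability of each tsum of logs
  have hlogdiff : ∀ (E : ℂ → ℂ) (E' : ℂ → ℂ), (∀ v ∈ s, ‖E v‖ ≤ M) →
      (∀ v, HasDerivAt E (E' v) v) → (∀ v, ‖E' v‖ ≤ 2 * π * ‖E v‖) →
      DifferentiableAt ℂ (fun v => ∑' i : ℕ, Complex.log (1 - E v * q ^ (i + J + 1))) v₀ := by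
    intro E E' hEM hE hE'
    have hg : ∀ (i : ℕ), ∀ v ∈ s, HasDerivAt (fun v => Complex.log (1 - E v * q ^ (i + J + 1)))
        ((1 - E v * q ^ (i + J + 1))⁻¹ * -(E' v * q ^ (i + J + 1))) v := by
      intro i v hv
      have hw : ‖E v * q ^ (i + J + 1)‖ ≤ 1 / 2 :=
        le_trans (hkey v hv i (E v) (hEM v hv)) (hhalf i)
      have hinner : HasDerivAt (fun v => 1 - E v * q ^ (i + J + 1))
          (-(E' v * q ^ (i + J + 1))) v := ((hE v).mul_const _).const_sub 1
      have hslit : (1 - E v * q ^ (i + J + 1)) ∈ Complex.slitPlane := by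
        rw [Complex.mem_slitPlane_iff]
        left
        have h1 : (E v * q ^ (i + J + 1)).re ≤ 1 / 2 :=
          le_trans (le_trans (Complex.re_le_norm _) hw) le_rfl
        simp only [Complex.sub_re, Complex.one_re]
        linarith
      exact (Complex.hasDerivAt_log hslit).comp v hinner
    have hb : ∀ (i : ℕ), ∀ v ∈ s,
        ‖(1 - E v * q ^ (i + J + 1))⁻¹ * -(E' v * q ^ (i + J + 1))‖ ≤ 2 * π * ‖q‖ ^ i := by
      intro i v hv
      have hw : ‖E v * q ^ (i + J + 1)‖ ≤ (1 / 2) * ‖q‖ ^ i := hkey v hv i (E v) (hEM v hv)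
      have hw2 : ‖E v * q ^ (i + J + 1)‖ ≤ 1 / 2 := le_trans hw (hhalf i)
      have hinv : ‖(1 - E v * q ^ (i + J + 1))⁻¹‖ ≤ 2 := by
        rw [norm_inv]
        have h3 : 1 / 2 ≤ ‖1 - E v * q ^ (i + J + 1)‖ := by
          have := norm_sub_norm_le (1 : ℂ) (E v * q ^ (i + J + 1))
          simp only [norm_one] at this
          linarith
        rw [inv_le_comm₀ (by linarith) (by norm_num)]
        linarith
      have hnum : ‖-(E' v * q ^ (i + J + 1))‖ ≤ π * ‖q‖ ^ i := by
        rw [norm_neg, norm_mul]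
        have h5 : ‖E' v‖ * ‖q ^ (i + J + 1)‖ ≤ (2 * π * ‖E v‖) * ‖q ^ (i + J + 1)‖ :=
          mul_le_mul_of_nonneg_right (hE' v) (norm_nonneg _)
        have h6 : (2 * π * ‖E v‖) * ‖q ^ (i + J + 1)‖ = 2 * π * ‖E v * q ^ (i + J + 1)‖ := by
          rw [norm_mul]; ring
        have h7 : 2 * π * ‖E v * q ^ (i + J + 1)‖ ≤ 2 * π * ((1 / 2) * ‖q‖ ^ i) :=
          mul_le_mul_of_nonneg_left hw (by positivity)
        nlinarith [Real.pi_pos]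
      calc ‖(1 - E v * q ^ (i + J + 1))⁻¹ * -(E' v * q ^ (i + J + 1))‖
          = ‖(1 - E v * q ^ (i + J + 1))⁻¹‖ * ‖-(E' v * q ^ (i + J + 1))‖ := norm_mul _ _
        _ ≤ 2 * (π * ‖q‖ ^ i) := by
            apply mul_le_mul hinv (by simpa using hnum) (norm_nonneg _) (by norm_num)
        _ = 2 * π * ‖q‖ ^ i := by ring
    have hg0 : Summable fun i : ℕ => Complex.log (1 - E v₀ * q ^ (i + J + 1)) :=
      log_summable_sub (summable_tail hq (E v₀) J)
    exact (hasDerivAt_tsum_of_isPreconnected hu hopen hconn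
      (fun i v hv => hg i v hv) (fun i v hv => hb i v hv) hv₀s hg0 hv₀s).differentiableAt
  -- differentiability of the exponentials
  have hE₁der : ∀ v : ℂ, HasDerivAt E₁ (2 * (π : ℂ) * Complex.I * E₁ v) v := by
    intro v
    have h0 : HasDerivAt (fun v : ℂ => 2 * (π : ℂ) * Complex.I * v)
        (2 * (π : ℂ) * Complex.I) v := by
      simpa using (hasDerivAt_id v).const_mul (2 * (π : ℂ) * Complex.I)
    have := (Complex.hasDerivAt_exp (2 * (π : ℂ) * Complex.I * v)).comp v h0
    simpa [hE₁, Function.comp_def, mul_comm] using this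
  have hE₂der : ∀ v : ℂ, HasDerivAt E₂ (-(2 * (π : ℂ) * Complex.I) * E₂ v) v := by
    intro v
    have h0 : HasDerivAt (fun v : ℂ => -(2 * (π : ℂ) * Complex.I * v))
        (-(2 * (π : ℂ) * Complex.I)) v := by
      simpa using ((hasDerivAt_id v).const_mul (2 * (π : ℂ) * Complex.I)).fun_neg
    have := (Complex.hasDerivAt_exp (-(2 * (π : ℂ) * Complex.I * v))).comp v h0
    simpa [hE₂, Function.comp_def, mul_comm] using this
  have hd1 : DifferentiableAt ℂ
      (fun v => ∑' i : ℕ, Complex.log (1 - E₁ v * q ^ (i + J + 1))) v₀ := by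
    apply hlogdiff E₁ (fun v => 2 * (π : ℂ) * Complex.I * E₁ v)
      (fun v hv => (hEb v hv).1) hE₁der
    intro v
    rw [norm_mul]
    apply mul_le_mul_of_nonneg_right _ (norm_nonneg _)
    rw [show (2 * (π : ℂ) * Complex.I) = ((2 * π : ℝ) : ℂ) * Complex.I by push_cast; ring]
    rw [norm_mul, Complex.norm_I, Complex.norm_real, mul_one, Real.norm_eq_abs,
      _root_.abs_of_nonneg (by positivity : (0:ℝ) ≤ 2 * π)]
  have hd2 : DifferentiableAt ℂ
      (fun v => ∑' i : ℕ, Complex.log (1 - E₂ v * q ^ (i + J + 1))) v₀ := by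
    apply hlogdiff E₂ (fun v => -(2 * (π : ℂ) * Complex.I) * E₂ v)
      (fun v hv => (hEb v hv).2) hE₂der
    intro v
    rw [norm_mul]
    apply mul_le_mul_of_nonneg_right _ (norm_nonneg _)
    rw [show (-(2 * (π : ℂ) * Complex.I)) = ((2 * π : ℝ) : ℂ) * (-Complex.I) by push_cast; ring]
    rw [norm_mul, norm_neg, Complex.norm_I, Complex.norm_real, mul_one, Real.norm_eq_abs,
      _root_.abs_of_nonneg (by positivity : (0:ℝ) ≤ 2 * π)]
  -- Φ is differentiable at v₀
  have hE₁diff : DifferentiableAt ℂ E₁ v₀ := (hE₁der v₀).differentiableAt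
  have hE₂diff : DifferentiableAt ℂ E₂ v₀ := (hE₂der v₀).differentiableAt
  have hΦdiff : DifferentiableAt ℂ Φ v₀ := by
    rw [hΦ]
    apply DifferentiableAt.mul
    · apply DifferentiableAt.fun_finsetProd
      intro i _
      exact ((differentiableAt_const _).mul
        ((hE₁diff.mul_const _).const_sub 1)).mul ((hE₂diff.mul_const _).const_sub 1)
    · exact ((differentiableAt_const _).mul hd1.cexp).mul hd2.cexp
  -- conclude
  have hev : (fun v => ∏' j : ℕ, F j v) =ᶠ[nhds v₀] Φ :=
    Filter.eventuallyEq_of_mem (hopen.mem_nhds hv₀s) heq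
  exact (hΦdiff.congr_of_eventuallyEq hev)


end JacobiAux

open JacobiAux in
theorem stmt4 (τ : ℂ) (hτ : 0 < τ.im) :
    Differentiable ℂ (fun v : ℂ => jTheta v τ) ∧
    deriv (fun v : ℂ => jTheta v τ) 0 =
      (π : ℂ) * jTheta₁ 0 τ * jTheta₂ 0 τ * jTheta₃ 0 τ := by
  set Q : ℂ := Complex.exp ((π : ℂ) * Complex.I * τ) with hQdef
  have hx : ‖Q‖ < 1 := by
    rw [hQdef, Complex.norm_exp]
    apply Real.exp_lt_one_iff.2
    have : ((π : ℂ) * Complex.I * τ).re = -(π * τ.im) := by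
      simp [Complex.mul_re, Complex.mul_im]
    rw [this]
    nlinarith [Real.pi_pos]
  have hq2 : jq τ = Q ^ 2 := by
    rw [jq, hQdef, sq, ← Complex.exp_add]
    congr 1
    ring
  have hq : ‖jq τ‖ < 1 := by rw [hq2]; exact norm_pow_lt hx two_pos
  have pow_eq : ∀ j : ℕ, jq τ ^ (j + 1) = Q ^ (2 * j + 2) := by
    intro j
    rw [hq2, ← pow_mul, Nat.mul_succ]
  have half_eq : ∀ j : ℕ, Complex.exp (2 * (π : ℂ) * Complex.I * τ * ((j : ℂ) + 1 / 2))
      = Q ^ (2 * j + 1) := by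
    intro j
    rw [show 2 * (π : ℂ) * Complex.I * τ * ((j : ℂ) + 1 / 2)
        = ((2 * j + 1 : ℕ) : ℂ) * ((π : ℂ) * Complex.I * τ) by push_cast; ring,
      Complex.exp_nat_mul, hQdef]
  -- the product part of θ
  set P : ℂ → ℂ := fun v : ℂ => ∏' j : ℕ, ((1 - jq τ ^ (j + 1)) *
      (1 - Complex.exp (2 * (π : ℂ) * Complex.I * v) * jq τ ^ (j + 1)) *
      (1 - Complex.exp (-(2 * (π : ℂ) * Complex.I * v)) * jq τ ^ (j + 1))) with hPdef
  have hPdiff : ∀ v, DifferentiableAt ℂ P v := fun v => diffAt_P hq v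
  have hfun : (fun v : ℂ => jTheta v τ)
      = fun v => (2 * Complex.exp ((π : ℂ) * Complex.I * τ / 4) * Complex.sin ((π : ℂ) * v))
        * P v := by
    funext v
    rw [jTheta, hPdef]
  -- multipliable building blocks
  have mA := mult_pow_sub hx 2 2 two_pos two_pos
  have mB := mult_pow_add hx 2 2 two_pos two_pos
  have mC := mult_pow_sub hx 2 1 two_pos one_pos
  have mD := mult_pow_add hx 2 1 two_pos one_pos
  set A : ℂ := ∏' n : ℕ, (1 - Q ^ (2 * n + 2)) with hA
  set B : ℂ := ∏' n : ℕ, (1 + Q ^ (2 * n + 2)) with hB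
  set C : ℂ := ∏' n : ℕ, (1 - Q ^ (2 * n + 1)) with hC
  set D : ℂ := ∏' n : ℕ, (1 + Q ^ (2 * n + 1)) with hD
  -- value of P at 0
  have hP0 : P 0 = A * A * A := by
    simp only [hPdef]
    have e1 : (∏' j : ℕ, ((1 - jq τ ^ (j + 1)) *
        (1 - Complex.exp (2 * (π : ℂ) * Complex.I * 0) * jq τ ^ (j + 1)) *
        (1 - Complex.exp (-(2 * (π : ℂ) * Complex.I * 0)) * jq τ ^ (j + 1))))
        = ∏' j : ℕ, ((1 - Q ^ (2 * j + 2)) * (1 - Q ^ (2 * j + 2)) * (1 - Q ^ (2 * j + 2))) := by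
      refine tprod_congr fun j => ?_
      rw [pow_eq j]
      simp
    rw [e1, Multipliable.tprod_mul (mA.1.mul mA.1) mA.1, Multipliable.tprod_mul mA.1 mA.1]
  -- derivative of θ at 0
  have hsin : HasDerivAt (fun v : ℂ =>
      2 * Complex.exp ((π : ℂ) * Complex.I * τ / 4) * Complex.sin ((π : ℂ) * v))
      (2 * Complex.exp ((π : ℂ) * Complex.I * τ / 4) * (π : ℂ)) 0 := by
    have h0 : HasDerivAt (fun v : ℂ => (π : ℂ) * v) (π : ℂ) 0 := by
      simpa using (hasDerivAt_id (0 : ℂ)).const_mul (π : ℂ)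
    have h1 := (Complex.hasDerivAt_sin ((π : ℂ) * 0)).comp 0 h0
    have h2 := h1.const_mul (2 * Complex.exp ((π : ℂ) * Complex.I * τ / 4))
    simpa [Function.comp_def] using h2
  have hPd : HasDerivAt P (deriv P 0) 0 := (hPdiff 0).hasDerivAt
  have hderiv : deriv (fun v : ℂ => jTheta v τ) 0
      = 2 * Complex.exp ((π : ℂ) * Complex.I * τ / 4) * (π : ℂ) * (A * A * A) := by
    rw [hfun, (hsin.fun_mul hPd).deriv, ← hP0]
    simp
  -- values of the other thetas
  have hθ1 : jTheta₁ 0 τ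
      = 2 * Complex.exp ((π : ℂ) * Complex.I * τ / 4) * (A * B * B) := by
    rw [jTheta₁]
    have e1 : (∏' j : ℕ, ((1 - jq τ ^ (j + 1)) *
        (1 + Complex.exp (2 * (π : ℂ) * Complex.I * 0) * jq τ ^ (j + 1)) *
        (1 + Complex.exp (-(2 * (π : ℂ) * Complex.I * 0)) * jq τ ^ (j + 1))))
        = ∏' j : ℕ, ((1 - Q ^ (2 * j + 2)) * (1 + Q ^ (2 * j + 2)) * (1 + Q ^ (2 * j + 2))) := by
      refine tprod_congr fun j => ?_
      rw [pow_eq j]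
      simp
    rw [e1, Multipliable.tprod_mul (mA.1.mul mB.1) mB.1, Multipliable.tprod_mul mA.1 mB.1]
    simp
    rfl
  have hθ2 : jTheta₂ 0 τ = A * C * C := by
    rw [jTheta₂]
    have e1 : (∏' j : ℕ, ((1 - jq τ ^ (j + 1)) *
        (1 - Complex.exp (2 * (π : ℂ) * Complex.I * 0) *
          Complex.exp (2 * (π : ℂ) * Complex.I * τ * ((j : ℂ) + 1 / 2))) *
        (1 - Complex.exp (-(2 * (π : ℂ) * Complex.I * 0)) *
          Complex.exp (2 * (π : ℂ) * Complex.I * τ * ((j : ℂ) + 1 / 2)))))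
        = ∏' j : ℕ, ((1 - Q ^ (2 * j + 2)) * (1 - Q ^ (2 * j + 1)) * (1 - Q ^ (2 * j + 1))) := by
      refine tprod_congr fun j => ?_
      rw [pow_eq j, half_eq j]
      simp
    rw [e1, Multipliable.tprod_mul (mA.1.mul mC.1) mC.1, Multipliable.tprod_mul mA.1 mC.1]
  have hθ3 : jTheta₃ 0 τ = A * D * D := by
    rw [jTheta₃]
    have e1 : (∏' j : ℕ, ((1 - jq τ ^ (j + 1)) *
        (1 + Complex.exp (2 * (π : ℂ) * Complex.I * 0) *
          Complex.exp (2 * (π : ℂ) * Complex.I * τ * ((j : ℂ) + 1 / 2))) *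
        (1 + Complex.exp (-(2 * (π : ℂ) * Complex.I * 0)) *
          Complex.exp (2 * (π : ℂ) * Complex.I * τ * ((j : ℂ) + 1 / 2)))))
        = ∏' j : ℕ, ((1 - Q ^ (2 * j + 2)) * (1 + Q ^ (2 * j + 1)) * (1 + Q ^ (2 * j + 1))) := by
      refine tprod_congr fun j => ?_
      rw [pow_eq j, half_eq j]
      simp
    rw [e1, Multipliable.tprod_mul (mA.1.mul mD.1) mD.1, Multipliable.tprod_mul mA.1 mD.1]
  have hbcd : B * (C * D) = 1 := bcd hx
  constructor
  · rw [hfun]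
    intro v
    exact ((differentiableAt_const _).mul
      (Complex.differentiable_sin.differentiableAt.comp v
        (differentiableAt_id.const_mul _))).mul (hPdiff v)
  · rw [hderiv, hθ1, hθ2, hθ3]
    linear_combination (-(2 * Complex.exp ((π : ℂ) * Complex.I * τ / 4) * (π : ℂ) * A ^ 3 *
      (B * (C * D) + 1))) * hbcd
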